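/- Define g(α, β, δ, τ, L) = τ(1 − α) − (1 + β)L − δ and h(α, β, δ, τ, L) = δ − τα − Lβ for nonnegative real arguments. Let ε > 0 and ᾱ > 0 satisfy 0 ≤ α ≤ ᾱ < (1/2)(1 − ε), let 0 ≤ L ≤ λ for some λ > 0, and let 0 ≤ β ≤ β̄ with β̄ > 0. Set δ* = ((ᾱ + β̄)/(1 − ε − 2ᾱ))·λ and τ* = ((1 + ε)δ* + (1 + β)L)/(1 − α). Then g(α, β, δ*, τ*, L) = ε·δ* and h(α, β, δ*, τ*, L) ≥ ε·δ*. -/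

import Mathlib

/-- technical parameter lemma, Lemma 4.4 of the paper.
With `g(α,β,δ,τ,L) = τ(1−α) − (1+β)L − δ` and `h(α,β,δ,τ,L) = δ − τα − Lβ`,
if `ε > 0`, `0 < ᾱ`, `0 ≤ α ≤ ᾱ < (1/2)(1−ε)`, `0 ≤ L ≤ λ` with `λ > 0`,
`0 ≤ β ≤ β̄` with `β̄ > 0`, `δ* = ((ᾱ+β̄)/(1−ε−2ᾱ))·λ` and
`τ* = ((1+ε)δ* + (1+β)L)/(1−α)`, then `g(α,β,δ*,τ*,L) = ε·δ*` and
`h(α,β,δ*,τ*,L) ≥ ε·δ*`. -/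
theorem stmt_3 (g h : ℝ → ℝ → ℝ → ℝ → ℝ → ℝ)
    (hg : ∀ α β δ τ L, g α β δ τ L = τ * (1 - α) - (1 + β) * L - δ)
    (hh : ∀ α β δ τ L, h α β δ τ L = δ - τ * α - L * β)
    (ε αbar α β βbar L lam δstar τstar : ℝ)
    (hε : 0 < ε) (hαbar : 0 < αbar)
    (hα0 : 0 ≤ α) (hααbar : α ≤ αbar) (hαbarlt : αbar < (1 / 2) * (1 - ε))
    (hL0 : 0 ≤ L) (hLlam : L ≤ lam) (hlam : 0 < lam)
    (hβ0 : 0 ≤ β) (hββbar : β ≤ βbar) (hβbar : 0 < βbar)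
    (hδ : δstar = (αbar + βbar) / (1 - ε - 2 * αbar) * lam)
    (hτ : τstar = ((1 + ε) * δstar + (1 + β) * L) / (1 - α)) :
    g α β δstar τstar L = ε * δstar ∧ h α β δstar τstar L ≥ ε * δstar := by
  have hd : 0 < 1 - ε - 2 * αbar := by nlinarith
  have h1α : 0 < 1 - α := by nlinarith
  have hδ0 : 0 ≤ δstar := by
    rw [hδ]
    positivity
  have hτval : τstar * (1 - α) = (1 + ε) * δstar + (1 + β) * L := by
    rw [hτ]; field_simp
  have hδd : δstar * (1 - ε - 2 * αbar) = (αbar + βbar) * lam := by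
    rw [hδ, div_mul_eq_mul_div, div_mul_cancel₀ _ hd.ne']
  constructor
  · rw [hg]; linarith
  · rw [hh]
    rw [ge_iff_le, ← sub_nonneg]
    have key : δstar - τstar * α - L * β - ε * δstar =
        (δstar * (1 - ε - 2 * α) - L * (α + β)) / (1 - α) := by
      field_simp
      nlinarith [hτval]
    rw [key]
    apply div_nonneg _ (le_of_lt h1α)
    nlinarith [mul_nonneg hδ0 (by nlinarith : (0:ℝ) ≤ αbar - α)]
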